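/- For a prime implication filter P of an MV-algebra, ℓ(P) equals the intersection of all minimal prime implication filters contained in P. -/

import Mathlib

/-- An MV-algebra `(α, ⊕, ¬, 0)` with the standard axioms. -/
class MV (α : Type*) extends Add α, Neg α, Zero α where
  add_assoc : ∀ a b c : α, a + (b + c) = (a + b) + c
  add_comm : ∀ a b : α, a + b = b + a
  add_zero : ∀ a : α, a + 0 = a
  neg_neg : ∀ a : α, - -a = a
  add_neg_zero : ∀ a : α, a + -(0 : α) = -(0 : α)
  luk : ∀ a b : α, -(-a + b) + b = -(-b + a) + a

namespace MV

variable {α : Type*} [MV α]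

/-- The top element `1 = ¬0`. -/
def one (α : Type*) [MV α] : α := -(0 : α)

/-- Implication `x → y = ¬x ⊕ y`. -/
def imp (a b : α) : α := -a + b

/-- Strong conjunction `x ⊗ y = ¬(¬x ⊕ ¬y)`. -/
def otimes (a b : α) : α := -(-a + -b)

/-- Join `x ∨ y = (x → y) → y`. -/
def sup (a b : α) : α := imp (imp a b) b

/-- Meet `x ∧ y = ¬(¬x ∨ ¬y)`. -/
def inf (a b : α) : α := -(sup (-a) (-b))

/-- Order: `x ≤ y` iff `x → y = 1`. -/
def le (a b : α) : Prop := imp a b = one α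

/-- Strict order. -/
def lt (a b : α) : Prop := le a b ∧ a ≠ b

/-- `n`-fold `⊗`-power. -/
def pow (a : α) : ℕ → α
  | 0 => one α
  | n + 1 => otimes a (pow a n)

/-- An implication filter: a lattice filter closed under `⊗`. -/
def IsImpFilter (F : Set α) : Prop :=
  one α ∈ F ∧ (∀ x ∈ F, ∀ y : α, le x y → y ∈ F) ∧
    (∀ x ∈ F, ∀ y ∈ F, inf x y ∈ F) ∧ (∀ x ∈ F, ∀ y ∈ F, otimes x y ∈ F)

/-- A prime implication filter: proper and `x ∨ y ∈ F → x ∈ F ∨ y ∈ F`. -/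
def IsPrime (F : Set α) : Prop :=
  IsImpFilter F ∧ F ≠ Set.univ ∧ ∀ x y : α, sup x y ∈ F → x ∈ F ∨ y ∈ F

/-- A minimal prime implication filter. -/
def IsMinimalPrime (F : Set α) : Prop :=
  IsPrime F ∧ ∀ G : Set α, IsPrime G → G ⊆ F → G = F

/-- A maximal proper implication filter. -/
def IsMaximal (F : Set α) : Prop :=
  IsImpFilter F ∧ F ≠ Set.univ ∧
    ∀ G : Set α, IsImpFilter G → G ≠ Set.univ → F ⊆ G → G = F

/-- A counit: `u < 1` joining to `1` with some `v < 1`. -/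
def IsCounit (u : α) : Prop :=
  lt u (one α) ∧ ∃ v : α, lt v (one α) ∧ sup u v = one α

/-- The implication filter generated by a set. -/
def gen (S : Set α) : Set α := ⋂₀ {F : Set α | IsImpFilter F ∧ S ⊆ F}

/-- The Conrad filter: the implication filter generated by all counits. -/
def conrad (α : Type*) [MV α] : Set α := gen {u : α | IsCounit u}

/-- The localizing filter `ℓ(P)`, generated by `{x → p : p ∈ P, x ∉ P}`. -/
def locFilter (P : Set α) : Set α :=
  gen {z : α | ∃ x : α, x ∉ P ∧ ∃ p ∈ P, z = imp x p}

end MV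

open MV

namespace MVAux

variable {α : Type*} [MV α]

attribute [local simp] MV.neg_neg MV.add_zero

local notation "𝟙" => MV.one _

lemma add_comm' (a b : α) : a + b = b + a := MV.add_comm a b
lemma add_assoc' (a b c : α) : a + (b + c) = (a + b) + c := MV.add_assoc a b c
lemma add_left_comm' (a b c : α) : a + (b + c) = b + (a + c) := by
  rw [add_assoc', MV.add_comm a b, ← add_assoc']

lemma zero_add' (a : α) : (0 : α) + a = a := by rw [add_comm', MV.add_zero]

lemma add_one (a : α) : a + 𝟙 = 𝟙 := MV.add_neg_zero a
lemma one_add (a : α) : 𝟙 + a = 𝟙 := by rw [add_comm', add_one]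

lemma neg_one : -(𝟙 : α) = 0 := by
  show - -(0:α) = 0; simp

instance : Std.Associative (fun (a b : α) => a + b) := ⟨fun a b c => (add_assoc' a b c).symm⟩
instance : Std.Commutative (fun (a b : α) => a + b) := ⟨add_comm'⟩

lemma neg_add_self (a : α) : -a + a = 𝟙 := by
  have h := MV.luk a (𝟙 : α)
  rw [add_one, neg_one] at h
  rw [zero_add'] at h
  exact h.symm

lemma add_neg_self (a : α) : a + -a = 𝟙 := by rw [add_comm', neg_add_self]

lemma lrefl (a : α) : le a a := neg_add_self a

lemma le_top (a : α) : le a 𝟙 := by unfold MV.le MV.imp; rw [add_one]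

lemma le_of_eq' {a b : α} (h : a = b) : le a b := h ▸ lrefl a

/-- `a ≤ b` iff `b = a + c` for some `c`. -/
lemma le_iff_exists : ∀ {a b : α}, le a b ↔ ∃ c, b = a + c := by
  intro a b
  constructor
  · intro h
    have hl := MV.luk a b
    unfold MV.le MV.imp at h
    rw [h, neg_one, zero_add'] at hl
    exact ⟨-(-b + a), by rw [MV.add_comm a]; exact hl⟩
  · rintro ⟨c, rfl⟩
    show -a + (a + c) = 𝟙
    rw [add_assoc', neg_add_self, one_add]

lemma le_add_left (a c : α) : le a (a + c) := le_iff_exists.2 ⟨c, rfl⟩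
lemma le_add_right (a c : α) : le a (c + a) := le_iff_exists.2 ⟨c, add_comm' c a⟩

lemma ltrans {a b c : α} (h1 : le a b) (h2 : le b c) : le a c := by
  rcases le_iff_exists.1 h1 with ⟨u, rfl⟩
  rcases le_iff_exists.1 h2 with ⟨v, rfl⟩
  rw [← add_assoc']
  exact le_add_left _ _

lemma lantisymm {a b : α} (h1 : le a b) (h2 : le b a) : a = b := by
  have hl := MV.luk a b
  unfold MV.le MV.imp at h1 h2
  rw [h1, h2, neg_one, zero_add', zero_add'] at hl
  exact hl.symm

lemma bot_le' (a : α) : le (0 : α) a := by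
  show -(0:α) + a = 𝟙
  exact one_add a

lemma add_le_add_right {a b : α} (h : le a b) (c : α) : le (a + c) (b + c) := by
  rcases le_iff_exists.1 h with ⟨u, rfl⟩
  refine le_iff_exists.2 ⟨u, ?_⟩
  rw [← add_assoc', ← add_assoc', MV.add_comm c u]

lemma add_le_add_left {a b : α} (h : le a b) (c : α) : le (c + a) (c + b) := by
  rw [add_comm' c a, add_comm' c b]; exact add_le_add_right h c

lemma neg_le_neg {a b : α} (h : le a b) : le (-b) (-a) := by
  show -(-b) + -a = 𝟙
  rw [MV.neg_neg, add_comm']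
  exact h

lemma neg_le_neg_iff {a b : α} : le (-b) (-a) ↔ le a b := by
  constructor
  · intro h; have := neg_le_neg h; simpa using this
  · exact neg_le_neg

lemma sup_comm' (a b : α) : sup a b = sup b a := MV.luk a b

lemma le_sup_right' (a b : α) : le b (sup a b) := by
  show le b (-(-a + b) + b)
  rw [add_comm']
  exact le_add_left _ _

lemma le_sup_left' (a b : α) : le a (sup a b) := by
  rw [sup_comm']; exact le_sup_right' b a

lemma sup_of_le {b c : α} (h : le b c) : sup b c = c := by
  show -(-b + c) + c = c
  unfold MV.le MV.imp at h
  rw [h, neg_one, zero_add']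

lemma sup_le' {a b c : α} (h1 : le a c) (h2 : le b c) : le (sup a b) c := by
  have step1 : le (sup a b) (sup c b) := by
    show le (-(-a + b) + b) (-(-c + b) + b)
    exact add_le_add_right (neg_le_neg (add_le_add_right (neg_le_neg h1) b)) b
  rw [sup_comm' c b, sup_of_le h2] at step1
  exact step1

lemma neg_sup (a b : α) : -(sup a b) = inf (-a) (-b) := by
  unfold MV.inf; simp

lemma neg_inf (a b : α) : -(inf a b) = sup (-a) (-b) := by
  unfold MV.inf; simp

lemma inf_le_left' (a b : α) : le (inf a b) a := by
  have h := le_sup_left' (-a) (-b)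
  have := neg_le_neg h
  simpa [MV.inf] using this

lemma inf_le_right' (a b : α) : le (inf a b) b := by
  have h := le_sup_right' (-a) (-b)
  have := neg_le_neg h
  simpa [MV.inf] using this

lemma le_inf' {a b c : α} (h1 : le c a) (h2 : le c b) : le c (inf a b) := by
  have h := sup_le' (neg_le_neg h1) (neg_le_neg h2)
  have := neg_le_neg h
  simpa [MV.inf] using this

lemma inf_comm' (a b : α) : inf a b = inf b a := by
  unfold MV.inf; rw [sup_comm']

lemma inf_of_le {a b : α} (h : le a b) : inf a b = a :=
  lantisymm (inf_le_left' a b) (le_inf' (lrefl a) h)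

lemma otimes_comm (a b : α) : otimes a b = otimes b a := by
  unfold MV.otimes; rw [add_comm']

lemma otimes_one (a : α) : otimes a 𝟙 = a := by
  unfold MV.otimes; rw [neg_one]; simp

lemma one_otimes (a : α) : otimes 𝟙 a = a := by rw [otimes_comm, otimes_one]

lemma otimes_assoc (a b c : α) : otimes a (otimes b c) = otimes (otimes a b) c := by
  unfold MV.otimes; simp [add_assoc']

lemma otimes_left_comm (a b c : α) : otimes a (otimes b c) = otimes b (otimes a c) := by
  rw [otimes_assoc, otimes_comm a b, ← otimes_assoc]

lemma otimes_le_left (a b : α) : le (otimes a b) a := by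
  have h : le (-a) (-a + -b) := le_add_left _ _
  have := neg_le_neg h
  simpa [MV.otimes] using this

lemma otimes_le_right (a b : α) : le (otimes a b) b := by
  rw [otimes_comm]; exact otimes_le_left b a

lemma otimes_mono_right {b c : α} (h : le b c) (a : α) : le (otimes a b) (otimes a c) := by
  have := neg_le_neg (add_le_add_left (neg_le_neg h) (-a))
  simpa [MV.otimes] using this

lemma otimes_mono_left {b c : α} (h : le b c) (a : α) : le (otimes b a) (otimes c a) := by
  rw [otimes_comm b a, otimes_comm c a]; exact otimes_mono_right h a

lemma otimes_mono {a b c d : α} (h1 : le a b) (h2 : le c d) :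
    le (otimes a c) (otimes b d) :=
  ltrans (otimes_mono_left h1 c) (otimes_mono_right h2 b)

lemma otimes_neg_self (a : α) : otimes a (-a) = 0 := by
  unfold MV.otimes
  rw [MV.neg_neg, neg_add_self, neg_one]

lemma otimes_zero (a : α) : otimes a 0 = 0 := by
  unfold MV.otimes
  show -(-a + 𝟙) = 0
  rw [add_one, neg_one]

/-- `a ⊗ (a → b) ≤ b`. -/
lemma otimes_imp_le (a b : α) : le (otimes a (imp a b)) b := by
  show -(-(-a + -(-a + b))) + b = 𝟙
  rw [MV.neg_neg, ← MV.add_assoc, MV.luk a b, add_assoc', MV.add_comm (-a) (-(-b+a)),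
    ← add_assoc', neg_add_self, add_one]

/-- co-divisibility: `a ∨ b = (a ⊗ ¬b) + b`. -/
lemma sup_eq_otimes_add (a b : α) : sup a b = otimes a (-b) + b := by
  unfold MV.sup MV.imp MV.otimes; simp

/-- Residuation. -/
lemma residuation {a b c : α} : le (otimes a c) b ↔ le c (imp a b) := by
  constructor
  · intro h
    have h1 : le c (-a + otimes a c) := by
      have : -a + otimes a c = sup c (-a) := by
        rw [sup_eq_otimes_add]
        unfold MV.otimes
        simp [add_comm']
      rw [this]
      exact le_sup_left' _ _
    exact ltrans h1 (add_le_add_left h (-a))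
  · intro h
    exact ltrans (otimes_mono_right h a) (otimes_imp_le a b)

lemma le_iff_otimes_zero {a b : α} : le a b ↔ otimes a (-b) = 0 := by
  constructor
  · intro h
    unfold MV.le MV.imp at h
    unfold MV.otimes
    simp only [MV.neg_neg]
    rw [h, neg_one]
  · intro h
    unfold MV.otimes at h
    have h2 := congrArg Neg.neg h
    simp only [MV.neg_neg] at h2
    exact h2

/-- divisibility: `a ⊗ (a → b) = a ∧ b`. -/
lemma div_eq_inf (a b : α) : otimes a (imp a b) = inf a b := by
  have h := MV.luk (-b) (-a)
  simp only [MV.neg_neg] at h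
  -- h : -(b + -a) + -a = -(a + -b) + -b
  show -(-a + -(-a + b)) = -(sup (-a) (-b))
  unfold MV.sup MV.imp
  simp only [MV.neg_neg]
  rw [← h, MV.add_comm b (-a), MV.add_comm (-(-a + b)) (-a)]

/-- `(a+b) ⊗ ¬b = a ∧ ¬b`. -/
lemma add_otimes_neg (a b : α) : otimes (a + b) (-b) = inf a (-b) := by
  have h := div_eq_inf (-b) a
  unfold MV.imp at h
  rw [MV.neg_neg] at h
  rw [inf_comm'] at h
  rw [← h, otimes_comm, add_comm' b a]

/-- `x ≤ y + c ↔ x ⊗ ¬y ≤ c`. -/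
lemma le_add_iff {x y c : α} : le x (y + c) ↔ le (otimes (-y) x) c := by
  have : y + c = imp (-y) c := by unfold MV.imp; rw [MV.neg_neg]
  rw [this]
  exact residuation.symm

/-- Subdistributivity : `a ⊗ (b + c) ≤ (a ⊗ b) + c`. -/
lemma subdist (a b c : α) : le (otimes a (b + c)) (otimes a b + c) := by
  rw [le_add_iff]
  have key : otimes (-(otimes a b)) (otimes a (b + c))
      = otimes (b + c) (otimes a (imp a (-b))) := by
    unfold MV.imp MV.otimes
    simp only [MV.neg_neg]
    congr 1
    ac_rfl
  rw [key, div_eq_inf]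
  have h1 : le (otimes (b + c) (inf a (-b))) (otimes (b + c) (-b)) :=
    otimes_mono_right (inf_le_right' _ _) _
  have h2 : otimes (b + c) (-b) = inf c (-b) := by rw [add_comm' b c, add_otimes_neg]
  have h3 : le (otimes (b + c) (-b)) c := by rw [h2]; exact inf_le_left' _ _
  exact ltrans h1 h3

lemma le_one_iff {a : α} (h : le 𝟙 a) : a = 𝟙 := lantisymm (le_top a) h

instance : Std.Associative (fun (a b : α) => otimes a b) := ⟨fun a b c => (otimes_assoc a b c).symm⟩
instance : Std.Commutative (fun (a b : α) => otimes a b) := ⟨otimes_comm⟩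

lemma le_imp (a b : α) : le b (imp a b) := by
  show -b + (-a + b) = 𝟙
  rw [add_left_comm', neg_add_self, add_one]

lemma le_decomp {u v : α} (h : le u v) : v = u + -(-v + u) := by
  have hl := MV.luk u v
  unfold MV.le MV.imp at h
  rw [h, neg_one, zero_add'] at hl
  exact hl.trans (add_comm' (-(-v + u)) u)

/-- THE CRUX identity: `(p+q) + p⊗q = p+q`. -/
lemma crux (p q : α) : (p + q) + otimes p q = p + q := by
  have hA : p + q = p + inf q (-p) := by
    have h2 := le_decomp (le_add_left p q)
    have e : -(-(p + q) + p) = inf q (-p) := by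
      have h3 := add_otimes_neg q p
      unfold MV.otimes at h3
      simp only [MV.neg_neg] at h3
      rw [← h3, MV.add_comm q p]
    exact h2.trans (by rw [e])
  have hB : q = otimes p q + inf q (-p) := by
    have h2 := le_decomp (otimes_le_right p q)
    have e : -(-q + otimes p q) = inf q (-p) := by
      rw [← div_eq_inf]
      unfold MV.otimes MV.imp
      try simp only [MV.neg_neg]
      rw [MV.add_comm (-p) (-q)]
    exact h2.trans (by rw [e])
  have chain : p + q = (p + q) + otimes p q := by
    calc p + q = p + (otimes p q + inf q (-p)) := by rw [← hB]
    _ = (p + inf q (-p)) + otimes p q := by ac_rfl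
    _ = (p + q) + otimes p q := by rw [← hA]
  exact chain.symm

lemma imp_imp_eq (x y : α) : imp (imp x y) (imp y x) = imp y x := by
  have h := crux x (-y)
  unfold MV.otimes at h
  simp only [MV.neg_neg] at h
  -- h : x + -y + -(-x + y) = x + -y
  show -(-x + y) + (-y + x) = -y + x
  calc -(-x + y) + (-y + x) = x + -y + -(-x + y) := by ac_rfl
  _ = x + -y := h
  _ = -y + x := by ac_rfl

/-- Prelinearity. -/
lemma prelin (x y : α) : sup (imp x y) (imp y x) = 𝟙 := by
  show imp (imp (imp x y) (imp y x)) (imp y x) = 𝟙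
  rw [imp_imp_eq]
  exact lrefl _

lemma otimes_sup (a b c : α) : otimes a (sup b c) = sup (otimes a b) (otimes a c) := by
  apply lantisymm
  · rw [residuation]
    apply sup_le'
    · rw [← residuation]; exact le_sup_left' _ _
    · rw [← residuation]; exact le_sup_right' _ _
  · apply sup_le'
    · exact otimes_mono_right (le_sup_left' _ _) a
    · exact otimes_mono_right (le_sup_right' _ _) a

lemma sup_mono {a b c d : α} (h1 : le a c) (h2 : le b d) : le (sup a b) (sup c d) :=
  sup_le' (ltrans h1 (le_sup_left' _ _)) (ltrans h2 (le_sup_right' _ _))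

lemma otimes_le_sq (x y : α) : le (otimes x y) (sup (otimes x x) (otimes y y)) := by
  have h0 : otimes x y = otimes (otimes x y) (sup (imp x y) (imp y x)) := by
    rw [prelin, otimes_one]
  rw [h0, otimes_sup]
  apply sup_le'
  · have e : otimes (otimes x y) (imp x y) = otimes y (inf x y) := by
      rw [← div_eq_inf, otimes_comm x y, ← otimes_assoc]
    have h2 : le (otimes y (inf x y)) (otimes y y) := otimes_mono_right (inf_le_right' _ _) _
    exact ltrans (le_of_eq' e) (ltrans h2 (le_sup_right' _ _))
  · have e : otimes (otimes x y) (imp y x) = otimes x (inf y x) := by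
      rw [← div_eq_inf, ← otimes_assoc]
    have h2 : le (otimes x (inf y x)) (otimes x x) := otimes_mono_right (inf_le_right' _ _) _
    exact ltrans (le_of_eq' e) (ltrans h2 (le_sup_left' _ _))

lemma sq_sup_le (x y : α) : le (otimes (sup x y) (sup x y)) (sup (otimes x x) (otimes y y)) := by
  rw [otimes_sup]
  apply sup_le'
  · rw [otimes_comm, otimes_sup]
    apply sup_le'
    · exact ltrans (lrefl _) (le_sup_left' _ _)
    · exact otimes_le_sq x y
  · rw [otimes_comm, otimes_sup]
    apply sup_le'
    · have := otimes_le_sq y x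
      refine ltrans this (le_of_eq' ?_)
      rw [sup_comm']
    · exact le_sup_right' _ _

lemma pow_zero' (a : α) : pow a 0 = 𝟙 := rfl
lemma pow_succ' (a : α) (n : ℕ) : pow a (n+1) = otimes a (pow a n) := rfl
lemma pow_one' (a : α) : pow a 1 = a := by rw [pow_succ', pow_zero', otimes_one]

lemma pow_add' (a : α) (m n : ℕ) : pow a (m+n) = otimes (pow a m) (pow a n) := by
  induction m with
  | zero => rw [Nat.zero_add, pow_zero', one_otimes]
  | succ k ih =>
      have e : k + 1 + n = (k + n) + 1 := by omega
      rw [e, pow_succ', ih, pow_succ', otimes_assoc]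

lemma pow_le_of_le {m n : ℕ} (h : m ≤ n) (a : α) : le (pow a n) (pow a m) := by
  obtain ⟨k, rfl⟩ := Nat.exists_eq_add_of_le h
  rw [pow_add']
  exact otimes_le_left _ _

lemma pow_two_pow_sup (x y : α) (k : ℕ) :
    le (pow (sup x y) (2^k)) (sup (pow x (2^k)) (pow y (2^k))) := by
  induction k with
  | zero =>
      simp only [Nat.pow_zero, pow_one']
      exact lrefl _
  | succ k ih =>
      have e : (2:ℕ)^(k+1) = 2^k + 2^k := by ring
      rw [e, pow_add', pow_add', pow_add']
      exact ltrans (otimes_mono ih ih) (sq_sup_le _ _)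

/-! ### Filters -/

lemma filt_one {F : Set α} (h : IsImpFilter F) : 𝟙 ∈ F := h.1
lemma filt_up {F : Set α} (h : IsImpFilter F) {x y : α} (hx : x ∈ F) (hxy : le x y) : y ∈ F :=
  h.2.1 x hx y hxy
lemma filt_inf {F : Set α} (h : IsImpFilter F) {x y : α} (hx : x ∈ F) (hy : y ∈ F) : inf x y ∈ F :=
  h.2.2.1 x hx y hy
lemma filt_ot {F : Set α} (h : IsImpFilter F) {x y : α} (hx : x ∈ F) (hy : y ∈ F) : otimes x y ∈ F :=
  h.2.2.2 x hx y hy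

lemma pow_mem {F : Set α} (hF : IsImpFilter F) {a : α} (ha : a ∈ F) (n : ℕ) : pow a n ∈ F := by
  induction n with
  | zero => exact hF.1
  | succ k ih => exact filt_ot hF ha ih

lemma subset_gen {S : Set α} : S ⊆ gen S := by
  intro x hx
  refine Set.mem_sInter.2 ?_
  rintro F ⟨hF, hSF⟩
  exact hSF hx

lemma gen_subset {S F : Set α} (hF : IsImpFilter F) (h : S ⊆ F) : gen S ⊆ F := by
  intro z hz
  exact Set.mem_sInter.1 hz F ⟨hF, h⟩

lemma gen_isFilter (S : Set α) : IsImpFilter (gen S) := by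
  refine ⟨?_, ?_, ?_, ?_⟩
  · exact Set.mem_sInter.2 fun F hF => hF.1.1
  · intro x hx y hxy
    exact Set.mem_sInter.2 fun F hF => hF.1.2.1 x (Set.mem_sInter.1 hx F hF) y hxy
  · intro x hx y hy
    exact Set.mem_sInter.2 fun F hF =>
      hF.1.2.2.1 x (Set.mem_sInter.1 hx F hF) y (Set.mem_sInter.1 hy F hF)
  · intro x hx y hy
    exact Set.mem_sInter.2 fun F hF =>
      hF.1.2.2.2 x (Set.mem_sInter.1 hx F hF) y (Set.mem_sInter.1 hy F hF)

lemma mem_gen_insert {Q : Set α} (hQ : IsImpFilter Q) (x z : α) :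
    z ∈ gen (Q ∪ {x}) ↔ ∃ q ∈ Q, ∃ n, le (otimes q (pow x n)) z := by
  constructor
  · intro hz
    have hGf : IsImpFilter {w : α | ∃ q ∈ Q, ∃ n, le (otimes q (pow x n)) w} := by
      refine ⟨⟨𝟙, hQ.1, 0, le_top _⟩, ?_, ?_, ?_⟩
      · rintro w ⟨q, hq, n, hle⟩ y hwy
        exact ⟨q, hq, n, ltrans hle hwy⟩
      · rintro w ⟨q1, hq1, n1, h1⟩ y ⟨q2, hq2, n2, h2⟩
        refine ⟨otimes q1 q2, filt_ot hQ hq1 hq2, n1 + n2, le_inf' ?_ ?_⟩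
        · refine ltrans ?_ h1
          rw [pow_add']
          exact otimes_mono (otimes_le_left _ _) (otimes_le_left _ _)
        · refine ltrans ?_ h2
          rw [pow_add']
          exact otimes_mono (otimes_le_right _ _) (otimes_le_right _ _)
      · rintro w ⟨q1, hq1, n1, h1⟩ y ⟨q2, hq2, n2, h2⟩
        refine ⟨otimes q1 q2, filt_ot hQ hq1 hq2, n1 + n2, ?_⟩
        have e : otimes (otimes q1 q2) (pow x (n1+n2))
            = otimes (otimes q1 (pow x n1)) (otimes q2 (pow x n2)) := by
          rw [pow_add']
          ac_rfl
        rw [e]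
        exact otimes_mono h1 h2
    have hsub : Q ∪ {x} ⊆ {w : α | ∃ q ∈ Q, ∃ n, le (otimes q (pow x n)) w} := by
      rintro w (hw | hw)
      · exact ⟨w, hw, 0, by rw [pow_zero', otimes_one]; exact lrefl w⟩
      · rcases hw with rfl
        exact ⟨𝟙, hQ.1, 1, by rw [pow_one', one_otimes]; exact lrefl w⟩
    exact gen_subset hGf hsub hz
  · rintro ⟨q, hq, n, hle⟩
    have hg := gen_isFilter (Q ∪ {x})
    have hq' : q ∈ gen (Q ∪ {x}) := subset_gen (Or.inl hq)
    have hx' : x ∈ gen (Q ∪ {x}) := subset_gen (Or.inr rfl)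
    exact filt_up hg (filt_ot hg hq' (pow_mem hg hx' n)) hle

/-! ### Zorn arguments -/

lemma sInter_chain_prime {c : Set (Set α)} (hc : IsChain (· ⊆ ·) c) (hne : c.Nonempty)
    (hall : ∀ R ∈ c, IsPrime R) : IsPrime (⋂₀ c) := by
  obtain ⟨R0, hR0⟩ := hne
  refine ⟨⟨?_, ?_, ?_, ?_⟩, ?_, ?_⟩
  · exact Set.mem_sInter.2 fun R hR => (hall R hR).1.1
  · intro w hw y hle
    exact Set.mem_sInter.2 fun R hR => (hall R hR).1.2.1 w (Set.mem_sInter.1 hw R hR) y hle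
  · intro w hw y hy
    exact Set.mem_sInter.2 fun R hR =>
      (hall R hR).1.2.2.1 w (Set.mem_sInter.1 hw R hR) y (Set.mem_sInter.1 hy R hR)
  · intro w hw y hy
    exact Set.mem_sInter.2 fun R hR =>
      (hall R hR).1.2.2.2 w (Set.mem_sInter.1 hw R hR) y (Set.mem_sInter.1 hy R hR)
  · intro h
    have : R0 = Set.univ := Set.eq_univ_of_univ_subset (h ▸ Set.sInter_subset_of_mem hR0)
    exact (hall R0 hR0).2.1 this
  · intro x y hxy
    by_contra hcon
    push_neg at hcon
    obtain ⟨hx, hy⟩ := hcon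
    simp only [Set.mem_sInter, not_forall] at hx hy
    obtain ⟨R1, hR1c, hxR1⟩ := hx
    obtain ⟨R2, hR2c, hyR2⟩ := hy
    rcases hc.total hR1c hR2c with h12 | h21
    · rcases (hall R1 hR1c).2.2 x y (Set.mem_sInter.1 hxy R1 hR1c) with h | h
      · exact hxR1 h
      · exact hyR2 (h12 h)
    · rcases (hall R2 hR2c).2.2 x y (Set.mem_sInter.1 hxy R2 hR2c) with h | h
      · exact hxR1 (h21 h)
      · exact hyR2 h

lemma exists_minimalPrime (Q : Set α) (hQ : IsPrime Q) :
    ∃ m : Set α, IsMinimalPrime m ∧ m ⊆ Q := by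
  obtain ⟨m, hmQ, hmin⟩ := zorn_superset_nonempty {R : Set α | IsPrime R ∧ R ⊆ Q}
    (fun c hcS hchain hne => by
      refine ⟨⋂₀ c, ⟨sInter_chain_prime hchain hne (fun R hR => (hcS hR).1), ?_⟩,
        fun s hs => Set.sInter_subset_of_mem hs⟩
      obtain ⟨R0, hR0⟩ := hne
      exact (Set.sInter_subset_of_mem hR0).trans (hcS hR0).2) Q ⟨hQ, subset_rfl⟩
  refine ⟨m, ⟨hmin.prop.1, ?_⟩, hmin.prop.2⟩
  intro G hG hGm
  exact subset_antisymm hGm (hmin.2 ⟨hG, hGm.trans hmin.prop.2⟩ hGm)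

lemma exists_prime_avoiding {F : Set α} (hF : IsImpFilter F) {z : α} (hz : z ∉ F) :
    ∃ Q : Set α, IsPrime Q ∧ F ⊆ Q ∧ z ∉ Q := by
  obtain ⟨Q, hFQ, hmax⟩ := zorn_subset_nonempty {G : Set α | IsImpFilter G ∧ F ⊆ G ∧ z ∉ G}
    (fun c hcS hchain hne => by
      obtain ⟨G0, hG0⟩ := hne
      refine ⟨⋃₀ c, ⟨⟨Set.mem_sUnion.2 ⟨G0, hG0, (hcS hG0).1.1⟩, ?_, ?_, ?_⟩, ?_, ?_⟩,
        fun s hs => Set.subset_sUnion_of_mem hs⟩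
      · rintro w hw y hwy
        obtain ⟨G, hGc, hwG⟩ := Set.mem_sUnion.1 hw
        exact Set.mem_sUnion.2 ⟨G, hGc, (hcS hGc).1.2.1 w hwG y hwy⟩
      · rintro w hw y hy
        obtain ⟨G1, hG1c, hwG⟩ := Set.mem_sUnion.1 hw
        obtain ⟨G2, hG2c, hyG⟩ := Set.mem_sUnion.1 hy
        rcases hchain.total hG1c hG2c with h12 | h21
        · exact Set.mem_sUnion.2 ⟨G2, hG2c, (hcS hG2c).1.2.2.1 w (h12 hwG) y hyG⟩
        · exact Set.mem_sUnion.2 ⟨G1, hG1c, (hcS hG1c).1.2.2.1 w hwG y (h21 hyG)⟩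
      · rintro w hw y hy
        obtain ⟨G1, hG1c, hwG⟩ := Set.mem_sUnion.1 hw
        obtain ⟨G2, hG2c, hyG⟩ := Set.mem_sUnion.1 hy
        rcases hchain.total hG1c hG2c with h12 | h21
        · exact Set.mem_sUnion.2 ⟨G2, hG2c, (hcS hG2c).1.2.2.2 w (h12 hwG) y hyG⟩
        · exact Set.mem_sUnion.2 ⟨G1, hG1c, (hcS hG1c).1.2.2.2 w hwG y (h21 hyG)⟩
      · exact fun w hw => (hcS hG0).2.1.trans (Set.subset_sUnion_of_mem hG0) hw
      · intro hzU
        obtain ⟨G, hGc, hzG⟩ := Set.mem_sUnion.1 hzU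
        exact (hcS hGc).2.2 hzG) F ⟨hF, subset_rfl, hz⟩
  obtain ⟨hQf, hFQ', hzQ⟩ := hmax.prop
  have hmaxi : ∀ G : Set α, IsImpFilter G → Q ⊆ G → z ∉ G → G = Q := by
    intro G h1 h2 h3
    exact subset_antisymm (hmax.2 ⟨h1, hFQ'.trans h2, h3⟩ h2) h2
  refine ⟨Q, ⟨hQf, ?_, ?_⟩, hFQ', hzQ⟩
  · intro hu
    exact hzQ (hu ▸ Set.mem_univ z)
  · intro x y hxy
    by_contra hcon
    push_neg at hcon
    obtain ⟨hx, hy⟩ := hcon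
    have hzx : z ∈ gen (Q ∪ {x}) := by
      by_contra hzz
      have heq : gen (Q ∪ {x}) = Q :=
        hmaxi _ (gen_isFilter _) (Set.subset_union_left.trans subset_gen) hzz
      exact hx (heq ▸ subset_gen (Or.inr rfl))
    have hzy : z ∈ gen (Q ∪ {y}) := by
      by_contra hzz
      have heq : gen (Q ∪ {y}) = Q :=
        hmaxi _ (gen_isFilter _) (Set.subset_union_left.trans subset_gen) hzz
      exact hy (heq ▸ subset_gen (Or.inr rfl))
    obtain ⟨q1, hq1, n1, h1⟩ := (mem_gen_insert hQf x z).1 hzx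
    obtain ⟨q2, hq2, n2, h2⟩ := (mem_gen_insert hQf y z).1 hzy
    set N := max n1 n2 with hN
    have hN2 : N ≤ 2 ^ N := Nat.le_of_lt (Nat.lt_two_pow_self)
    have hle : le (otimes (otimes q1 q2) (pow (sup x y) (2^N))) z := by
      refine ltrans (otimes_mono_right (pow_two_pow_sup x y N) _) ?_
      rw [otimes_sup]
      apply sup_le'
      · exact ltrans (otimes_mono (otimes_le_left _ _)
          (pow_le_of_le (le_trans (le_max_left n1 n2) hN2) x)) h1
      · exact ltrans (otimes_mono (otimes_le_right _ _)
          (pow_le_of_le (le_trans (le_max_right n1 n2) hN2) y)) h2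
    have hmem : otimes (otimes q1 q2) (pow (sup x y) (2^N)) ∈ Q :=
      filt_ot hQf (filt_ot hQf hq1 hq2) (pow_mem hQf hxy _)
    exact hzQ (filt_up hQf hmem hle)

/-! ### locFilter facts -/

lemma locFilter_isFilter (P : Set α) : IsImpFilter (locFilter P) := gen_isFilter _

lemma generator_mem_prime {P m : Set α} (hP : IsPrime P) (hm : IsPrime m) (hmP : m ⊆ P)
    {x p : α} (hx : x ∉ P) (hp : p ∈ P) : imp x p ∈ m := by
  have h2 : sup (imp x p) (imp p x) ∈ m := (prelin x p) ▸ hm.1.1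
  rcases hm.2.2 _ _ h2 with h | h
  · exact h
  · exfalso
    have hpx : imp p x ∈ P := hmP h
    exact hx (filt_up hP.1 (filt_ot hP.1 hp hpx) (otimes_imp_le p x))

lemma locFilter_subset_prime {P m : Set α} (hP : IsPrime P) (hm : IsPrime m) (hmP : m ⊆ P) :
    locFilter P ⊆ m := by
  refine gen_subset hm.1 ?_
  rintro z ⟨x, hx, p, hp, rfl⟩
  exact generator_mem_prime hP hm hmP hx hp

lemma comparab {P Q : Set α} (hQ : IsImpFilter Q) (hsub : locFilter P ⊆ Q)
    {q0 : α} (hq0 : q0 ∈ Q) (hq0P : q0 ∉ P) : P ⊆ Q := by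
  intro p hp
  have hgen : imp q0 p ∈ locFilter P := subset_gen ⟨q0, hq0P, p, hp, rfl⟩
  exact filt_up hQ (filt_ot hQ hq0 (hsub hgen)) (otimes_imp_le q0 p)

end MVAux

/-- `ℓ(P)` is the intersection of the minimal primes contained in `P`. -/
theorem locFilter_eq_sInter_minimal {α : Type*} [MV α] (P : Set α) (hP : IsPrime P) :
    locFilter P = ⋂₀ {m : Set α | IsMinimalPrime m ∧ m ⊆ P} := by
  apply subset_antisymm
  · intro z hz
    refine Set.mem_sInter.2 ?_
    rintro m ⟨hm, hmP⟩
    exact MVAux.locFilter_subset_prime hP hm.1 hmP hz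
  · intro z hz
    by_contra hzloc
    obtain ⟨Q, hQ, hFQ, hzQ⟩ :=
      MVAux.exists_prime_avoiding (MVAux.locFilter_isFilter P) hzloc
    by_cases hQP : Q ⊆ P
    · obtain ⟨m, hmmin, hmQ⟩ := MVAux.exists_minimalPrime Q hQ
      have hzm : z ∈ m := Set.mem_sInter.1 hz m ⟨hmmin, hmQ.trans hQP⟩
      exact hzQ (hmQ hzm)
    · obtain ⟨q0, hq0Q, hq0P⟩ := Set.not_subset.1 hQP
      have hPQ : P ⊆ Q := MVAux.comparab hQ.1 hFQ hq0Q hq0P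
      obtain ⟨m, hmmin, hmP⟩ := MVAux.exists_minimalPrime P hP
      have hzm : z ∈ m := Set.mem_sInter.1 hz m ⟨hmmin, hmP⟩
      exact hzQ (hPQ (hmP hzm))
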